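/- Let H be a self-adjoint operator on ℓ²(G) for a countable set G with metric d, essentially self-adjoint on finitely supported vectors, with M_α := sup_n (∑_{m≠n} |⟨n|H|m⟩|² e^{α d(n,m)})^{1/2} < ∞ for some α > 0. Suppose the function F_μ(m) = (∑_{n: ⟨n|H|m⟩≠0} e^{−μ d(n,m)})^{1/2} (for some μ < α) is relatively H-bounded: ‖F_μ ψ‖ ≤ a‖Hψ‖ + b‖ψ‖. Then for z ∉ σ(H), ν ≥ 0 with ν < ((α−μ)/(2M_α))·min{M_α, 1/a, 1/(a‖H(H−z)^{−1}‖ + b‖(H−z)^{−1}‖)}, and subsets S, T ⊆ G: ‖P_S (H−z)^{−1} P_T‖ ≤ A_{z;ν} e^{−ν d(S,T)}, where A_{z;ν} = ‖(H−z)^{−1}‖ / (1 − (2M_α ν/(α−μ))(a‖H(H−z)^{−1}‖ + b‖(H−z)^{−1}‖)). -/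

import Mathlib

open scoped InnerProductSpace ENNReal

/-- Matrix elements ⟨n|H|m⟩ = ⟨δ_n, H δ_m⟩ of an operator on ℓ²(G). -/
noncomputable def Hmat {G : Type*} [DecidableEq G]
    (H : lp (fun _ : G => ℂ) 2 →L[ℂ] lp (fun _ : G => ℂ) 2) (n m : G) : ℂ :=
  ⟪lp.single 2 n (1 : ℂ), H (lp.single 2 m (1 : ℂ))⟫_ℂ

namespace CT

variable {G : Type*}

lemma rpow_two_eq (x : ℝ) : x ^ ((2 : ℝ≥0∞)).toReal = x ^ (2:ℕ) := by
  rw [show ((2 : ℝ≥0∞)).toReal = ((2:ℕ):ℝ) by norm_num, Real.rpow_natCast]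

lemma norm_sq_eq_tsum (f : lp (fun _ : G => ℂ) 2) : ‖f‖ ^ 2 = ∑' n, ‖f n‖ ^ 2 := by
  have h2 : (0:ℝ) < ((2 : ℝ≥0∞)).toReal := by norm_num
  have := lp.norm_rpow_eq_tsum h2 f
  simp only [rpow_two_eq] at this
  exact this

lemma sum_sq_le_norm_sq (f : lp (fun _ : G => ℂ) 2) (s : Finset G) :
    ∑ n ∈ s, ‖f n‖ ^ 2 ≤ ‖f‖ ^ 2 := by
  have h2 : (0:ℝ) < ((2 : ℝ≥0∞)).toReal := by norm_num
  have := lp.sum_rpow_le_norm_rpow h2 f s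
  simp only [rpow_two_eq] at this
  exact this

section mulOp

variable (w : G → ℂ) (C : ℝ)

lemma memℓp_mul (hC : 0 ≤ C) (hw : ∀ n, ‖w n‖ ≤ C) (ψ : lp (fun _ : G => ℂ) 2) :
    Memℓp (fun n => w n * ψ n) 2 := by
  have h2 : (0:ℝ) < ((2 : ℝ≥0∞)).toReal := by norm_num
  apply memℓp_gen
  have hs := (lp.memℓp ψ).summable h2
  refine Summable.of_nonneg_of_le (fun n => Real.rpow_nonneg (norm_nonneg _) _)
    (fun n => ?_) (hs.mul_left (C ^ ((2:ℝ≥0∞)).toReal))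
  calc ‖w n * ψ n‖ ^ ((2:ℝ≥0∞)).toReal ≤ (C * ‖ψ n‖) ^ ((2:ℝ≥0∞)).toReal := by
        apply Real.rpow_le_rpow (norm_nonneg _) ?_ (by norm_num)
        rw [norm_mul]; exact mul_le_mul_of_nonneg_right (hw n) (norm_nonneg _)
    _ = C ^ ((2:ℝ≥0∞)).toReal * ‖ψ n‖ ^ ((2:ℝ≥0∞)).toReal :=
        Real.mul_rpow hC (norm_nonneg _)

noncomputable def mulVec (hC : 0 ≤ C) (hw : ∀ n, ‖w n‖ ≤ C) (ψ : lp (fun _ : G => ℂ) 2) :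
    lp (fun _ : G => ℂ) 2 :=
  ⟨fun n => w n * ψ n, memℓp_mul w C hC hw ψ⟩

@[simp] lemma mulVec_apply (hC : 0 ≤ C) (hw : ∀ n, ‖w n‖ ≤ C) (ψ : lp (fun _ : G => ℂ) 2)
    (n : G) : (mulVec w C hC hw ψ) n = w n * ψ n := rfl

lemma mulVec_norm_le (hC : 0 ≤ C) (hw : ∀ n, ‖w n‖ ≤ C) (ψ : lp (fun _ : G => ℂ) 2) :
    ‖mulVec w C hC hw ψ‖ ≤ C * ‖ψ‖ := by
  have h2 : (0:ℝ) < ((2 : ℝ≥0∞)).toReal := by norm_num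
  refine lp.norm_le_of_forall_sum_le h2 (mul_nonneg hC (norm_nonneg _)) (fun s => ?_)
  calc ∑ n ∈ s, ‖(mulVec w C hC hw ψ) n‖ ^ ((2:ℝ≥0∞)).toReal
      ≤ ∑ n ∈ s, C ^ ((2:ℝ≥0∞)).toReal * ‖ψ n‖ ^ ((2:ℝ≥0∞)).toReal := by
        refine Finset.sum_le_sum (fun n _ => ?_)
        rw [← Real.mul_rpow hC (norm_nonneg _)]
        apply Real.rpow_le_rpow (norm_nonneg _) ?_ (by norm_num)
        rw [mulVec_apply, norm_mul]
        exact mul_le_mul_of_nonneg_right (hw n) (norm_nonneg _)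
    _ = C ^ ((2:ℝ≥0∞)).toReal * ∑ n ∈ s, ‖ψ n‖ ^ ((2:ℝ≥0∞)).toReal := by
        rw [Finset.mul_sum]
    _ ≤ C ^ ((2:ℝ≥0∞)).toReal * ‖ψ‖ ^ ((2:ℝ≥0∞)).toReal := by
        refine mul_le_mul_of_nonneg_left (lp.sum_rpow_le_norm_rpow h2 ψ s) ?_
        exact Real.rpow_nonneg hC _
    _ = (C * ‖ψ‖) ^ ((2:ℝ≥0∞)).toReal := (Real.mul_rpow hC (norm_nonneg _)).symm

noncomputable def mulOp (hC : 0 ≤ C) (hw : ∀ n, ‖w n‖ ≤ C) :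
    lp (fun _ : G => ℂ) 2 →L[ℂ] lp (fun _ : G => ℂ) 2 :=
  LinearMap.mkContinuous
    { toFun := mulVec w C hC hw
      map_add' := fun ψ φ => by
        apply lp.ext; funext n
        simp only [mulVec_apply, lp.coeFn_add, Pi.add_apply]
        simp [lp.coeFn_add, mul_add]
      map_smul' := fun c ψ => by
        apply lp.ext; funext n
        simp [lp.coeFn_smul]
        ring }
    C (mulVec_norm_le w C hC hw)

@[simp] lemma mulOp_apply (hC : 0 ≤ C) (hw : ∀ n, ‖w n‖ ≤ C) (ψ : lp (fun _ : G => ℂ) 2)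
    (n : G) : (mulOp w C hC hw ψ) n = w n * ψ n := rfl

end mulOp

section inner

variable [DecidableEq G]

lemma inner_eq (f g : lp (fun _ : G => ℂ) 2) :
    ⟪f, g⟫_ℂ = ∑' n, (starRingEnd ℂ) (f n) * g n := by
  rw [lp.inner_eq_tsum]
  exact tsum_congr (fun n => RCLike.inner_apply' _ _)

omit [DecidableEq G] in
lemma mulOp_inner (w : G → ℂ) (C : ℝ) (hC : 0 ≤ C) (hw : ∀ n, ‖w n‖ ≤ C)
    (hre : ∀ n, (starRingEnd ℂ) (w n) = w n) (f g : lp (fun _ : G => ℂ) 2) :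
    ⟪mulOp w C hC hw f, g⟫_ℂ = ⟪f, mulOp w C hC hw g⟫_ℂ := by
  rw [lp.inner_eq_tsum, lp.inner_eq_tsum]
  apply tsum_congr
  intro n
  rw [RCLike.inner_apply', RCLike.inner_apply']
  rw [mulOp_apply, mulOp_apply, map_mul, hre n]
  ring

lemma inner_single (n : G) (f : lp (fun _ : G => ℂ) 2) :
    ⟪lp.single 2 n (1:ℂ), f⟫_ℂ = f n := by
  rw [lp.inner_single_left]
  simp [RCLike.inner_apply]

lemma Hmat_eq (H : lp (fun _ : G => ℂ) 2 →L[ℂ] lp (fun _ : G => ℂ) 2) (n m : G) :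
    Hmat H n m = (H (lp.single 2 m (1:ℂ))) n := inner_single n _

lemma single_rep (s : Finset G) (φ : lp (fun _ : G => ℂ) 2) (hφ : ∀ n ∉ s, φ n = 0) :
    φ = ∑ n ∈ s, lp.single 2 n (φ n) := by
  apply lp.ext; funext m
  rw [lp.coeFn_sum]
  simp only [Finset.sum_apply]
  by_cases hm : m ∈ s
  · rw [Finset.sum_eq_single m]
    · simp [lp.single_apply_self]
    · intro n _ hnm; exact lp.single_apply_ne 2 n _ (Ne.symm hnm)
    · intro h; exact absurd hm h
  · rw [hφ m hm, Finset.sum_eq_zero]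
    intro n hn
    exact lp.single_apply_ne 2 n _ (fun h : m = n => hm (h ▸ hn))

lemma inner_finsupp (s : Finset G) (φ ξ : lp (fun _ : G => ℂ) 2) (hφ : ∀ n ∉ s, φ n = 0) :
    ⟪φ, ξ⟫_ℂ = ∑ n ∈ s, (starRingEnd ℂ) (φ n) * ξ n := by
  rw [inner_eq]
  apply tsum_eq_sum
  intro n hn
  simp [hφ n hn]

lemma partial_coe (χ : lp (fun _ : G => ℂ) 2) (s : Finset G) (k : G) :
    (∑ n ∈ s, lp.single 2 n (χ n) : lp (fun _ : G => ℂ) 2) k = if k ∈ s then χ k else 0 := by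
  rw [lp.coeFn_sum]
  simp only [Finset.sum_apply]
  by_cases hk : k ∈ s
  · rw [if_pos hk, Finset.sum_eq_single k]
    · simp [lp.single_apply_self]
    · intro n _ hnk; exact lp.single_apply_ne 2 n _ (Ne.symm hnk)
    · intro hk'; exact absurd hk hk'
  · rw [if_neg hk, Finset.sum_eq_zero]
    intro n hn
    exact lp.single_apply_ne 2 n _ (fun hkn : k = n => hk (hkn ▸ hn))

end inner

section analytic

lemma exp_conv (ν β t : ℝ) (hν : 0 ≤ ν) (hνβ : ν ≤ β) (hβ : 0 < β) :
    Real.exp (ν * t) - 1 ≤ ν / β * Real.exp (β * t) := by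
  have h1 : (0:ℝ) ≤ 1 - ν / β := by
    have : ν / β ≤ 1 := (div_le_one hβ).mpr hνβ
    linarith
  have h2 : (0:ℝ) ≤ ν / β := div_nonneg hν hβ.le
  have h3 : (1 - ν / β) + ν / β = 1 := by ring
  have := convexOn_exp.2 (Set.mem_univ (0:ℝ)) (Set.mem_univ (β * t)) h1 h2 h3
  simp only [smul_eq_mul, mul_zero, zero_add, Real.exp_zero] at this
  have harg : ν / β * (β * t) = ν * t := by field_simp
  rw [harg] at this
  nlinarith [Real.exp_pos (β * t)]

lemma abs_exp_sub_one (x : ℝ) : |Real.exp x - 1| ≤ Real.exp |x| - 1 := by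
  rcases le_or_gt 0 x with h | h
  · rw [abs_of_nonneg h, abs_of_nonneg
      (by nlinarith [Real.exp_le_exp.mpr h, Real.exp_zero] : (0:ℝ) ≤ Real.exp x - 1)]
  · rw [abs_of_neg h, abs_of_nonpos
      (by nlinarith [Real.exp_lt_exp.mpr h, Real.exp_zero] : Real.exp x - 1 ≤ 0)]
    have h1 : Real.exp x * Real.exp (-x) = 1 := by rw [← Real.exp_add]; simp
    nlinarith [Real.exp_pos x, Real.exp_pos (-x), sq_nonneg (Real.exp x - 1)]

lemma key_bound (ν β t x : ℝ) (hν : 0 ≤ ν) (hνβ : ν ≤ β) (hβ : 0 < β)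
    (hx : |x| ≤ ν * t) : |Real.exp x - 1| ≤ ν / β * Real.exp (β * t) := by
  calc |Real.exp x - 1| ≤ Real.exp |x| - 1 := abs_exp_sub_one x
    _ ≤ Real.exp (ν * t) - 1 := by have := Real.exp_le_exp.mpr hx; linarith
    _ ≤ ν / β * Real.exp (β * t) := exp_conv ν β t hν hνβ hβ

end analytic

section hfun

variable [MetricSpace G] (T : Set G) (D : ℝ)

noncomputable def hfun (n : G) : ℝ := min (sInf ((dist n) '' T)) D

lemma distSet_bdd (n : G) : BddBelow ((dist n) '' T) := by
  refine ⟨0, ?_⟩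
  rintro x ⟨m, _, rfl⟩
  exact dist_nonneg

lemma distSet_nonneg (n : G) : 0 ≤ sInf ((dist n) '' T) := by
  apply Real.sInf_nonneg
  rintro x ⟨m, _, rfl⟩
  exact dist_nonneg

lemma hfun_nonneg (hD : 0 ≤ D) (n : G) : 0 ≤ hfun T D n :=
  le_min (distSet_nonneg T n) hD

lemma hfun_le (n : G) : hfun T D n ≤ D := min_le_right _ _

lemma hfun_eq_zero (hD : 0 ≤ D) {n : G} (hn : n ∈ T) : hfun T D n = 0 := by
  have h1 : sInf ((dist n) '' T) ≤ 0 := by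
    have := csInf_le (distSet_bdd T n) ⟨n, hn, dist_self n⟩
    simpa using this
  have h2 := distSet_nonneg T n
  unfold hfun
  rw [le_antisymm h1 h2]
  exact min_eq_left hD

lemma hfun_eq_of_le {n : G} (hge : D ≤ sInf ((dist n) '' T)) : hfun T D n = D :=
  min_eq_right hge

lemma hfun_lip (n m : G) : |hfun T D n - hfun T D m| ≤ dist n m := by
  rcases Set.eq_empty_or_nonempty T with rfl | hT
  · simp [hfun, dist_nonneg]
  have key : ∀ p q : G, sInf ((dist p) '' T) ≤ sInf ((dist q) '' T) + dist p q := by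
    intro p q
    rw [← sub_le_iff_le_add]
    apply le_csInf (hT.image _)
    rintro x ⟨k, hk, rfl⟩
    have h1 : sInf ((dist p) '' T) ≤ dist p k := csInf_le (distSet_bdd T p) ⟨k, hk, rfl⟩
    have h2 : dist p k ≤ dist q k + dist p q := by
      have := dist_triangle p q k
      linarith [this]
    linarith
  have habs : |sInf ((dist n) '' T) - sInf ((dist m) '' T)| ≤ dist n m := by
    rw [abs_le]
    constructor
    · have := key m n; rw [dist_comm m n] at this; linarith
    · have := key n m; linarith
  calc |hfun T D n - hfun T D m| ≤ max |sInf ((dist n) '' T) - sInf ((dist m) '' T)| |D - D| :=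
        abs_min_sub_min_le_max _ _ _ _
    _ ≤ dist n m := by simpa using habs

end hfun

section core

variable [MetricSpace G] [DecidableEq G]

lemma core_estimate
    (H B : lp (fun _ : G => ℂ) 2 →L[ℂ] lp (fun _ : G => ℂ) 2)
    (α μ : ℝ) (Mα a b : ℝ) (hMα : 0 < Mα) (ha : 0 ≤ a) (hb : 0 ≤ b)
    (hαμ : 0 < α - μ)
    (hMsummable : ∀ n : G, Summable fun m : G =>
      Set.indicator {m' : G | m' ≠ n}
        (fun m' => ‖Hmat H n m'‖ ^ 2 * Real.exp (α * dist n m')) m)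
    (hM : ∀ n : G,
      (∑' m : G, Set.indicator {m' : G | m' ≠ n}
          (fun m' => ‖Hmat H n m'‖ ^ 2 * Real.exp (α * dist n m')) m) ≤ Mα ^ 2)
    (hFsummable : ∀ m : G, Summable fun n : G =>
      Set.indicator {n' : G | Hmat H n' m ≠ 0} (fun n' => Real.exp (-μ * dist n' m)) n)
    (hF : ∀ ψ : lp (fun _ : G => ℂ) 2, (Function.support fun n : G => ψ n).Finite →
      (∑' m : G, ENNReal.ofReal
          ((∑' n : G, Set.indicator {n' : G | Hmat H n' m ≠ 0}
              (fun n' => Real.exp (-μ * dist n' m)) n) * ‖ψ m‖ ^ 2))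
        ≤ ENNReal.ofReal ((a * ‖H ψ‖ + b * ‖ψ‖) ^ 2))
    (ν : ℝ) (hν0 : 0 ≤ ν) (hν1 : ν ≤ (α - μ) / 2)
    (h : G → ℝ) (hlip : ∀ n m, |h n - h m| ≤ dist n m)
    (hB : ∀ m n : G, (B (lp.single 2 m 1)) n
        = ((Real.exp (ν * (h n - h m)) - 1 : ℝ) : ℂ) * Hmat H n m)
    (φ χ : lp (fun _ : G => ℂ) 2) (sφ sχ : Finset G)
    (hsφ : ∀ n ∉ sφ, φ n = 0) (hsχ : ∀ m ∉ sχ, χ m = 0) :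
    ‖⟪φ, B χ⟫_ℂ‖ ≤ Mα * (2 * ν / (α - μ)) * ‖φ‖ * (a * ‖H χ‖ + b * ‖χ‖) := by
  classical
  set β : ℝ := (α - μ) / 2 with hβdef
  have hβ : 0 < β := by positivity
  set K : ℝ := 2 * ν / (α - μ) with hKdef
  have hK0 : 0 ≤ K := by positivity
  have hKβ : K = ν / β := by
    rw [hKdef, hβdef, div_div_eq_mul_div, mul_comm]
  set c : G → G → ℂ := fun n m => ((Real.exp (ν * (h n - h m)) - 1 : ℝ) : ℂ) with hcdef
  have hχrep : χ = ∑ m ∈ sχ, lp.single 2 m (χ m) := single_rep sχ χ hsχ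
  have hBχ : ∀ n : G, (B χ) n = ∑ m ∈ sχ, χ m * (c n m * Hmat H n m) := by
    intro n
    conv_lhs => rw [hχrep]
    rw [map_sum]
    rw [lp.coeFn_sum]
    rw [Finset.sum_apply]
    congr 1; funext m
    have hsingle : lp.single 2 m (χ m)
        = χ m • (lp.single 2 m (1:ℂ) : lp (fun _ : G => ℂ) 2) := by
      rw [← lp.single_smul]; congr 1; simp
    rw [hsingle, map_smul, lp.coeFn_smul, Pi.smul_apply, smul_eq_mul, hB m n]
  have hinner : ⟪φ, B χ⟫_ℂ
      = ∑ p ∈ sφ ×ˢ sχ, (starRingEnd ℂ) (φ p.1) * (χ p.2 * (c p.1 p.2 * Hmat H p.1 p.2)) := by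
    rw [inner_finsupp sφ φ (B χ) hsφ, Finset.sum_product]
    congr 1; funext n
    rw [hBχ n, Finset.mul_sum]
  set P : Finset (G × G) := (sφ ×ˢ sχ).filter (fun p => Hmat H p.1 p.2 ≠ 0 ∧ p.2 ≠ p.1)
    with hPdef
  have hrestrict : ⟪φ, B χ⟫_ℂ
      = ∑ p ∈ P, (starRingEnd ℂ) (φ p.1) * (χ p.2 * (c p.1 p.2 * Hmat H p.1 p.2)) := by
    rw [hinner]
    refine (Finset.sum_subset (Finset.filter_subset _ _) ?_).symm
    intro p hp hnp
    rw [Finset.mem_filter] at hnp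
    push_neg at hnp
    by_cases hzero : Hmat H p.1 p.2 = 0
    · rw [hzero]; ring
    · have : p.2 = p.1 := hnp hp hzero
      have : c p.1 p.2 = 0 := by
        rw [hcdef]; simp [this]
      rw [this]; ring
  set f : G × G → ℝ := fun p => ‖φ p.1‖ * ‖Hmat H p.1 p.2‖ * Real.exp (α * dist p.1 p.2 / 2)
    with hfdef
  set g : G × G → ℝ := fun p => K * Real.exp (-μ * dist p.1 p.2 / 2) * ‖χ p.2‖ with hgdef
  have hf0 : ∀ p, 0 ≤ f p := fun p => by positivity
  have hg0 : ∀ p, 0 ≤ g p := fun p => by positivity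
  have hpoint : ∀ p ∈ P, ‖(starRingEnd ℂ) (φ p.1) * (χ p.2 * (c p.1 p.2 * Hmat H p.1 p.2))‖
      ≤ f p * g p := by
    rintro ⟨n, m⟩ hp
    have hcb : ‖c n m‖ ≤ K * (Real.exp (α * dist n m / 2) * Real.exp (-μ * dist n m / 2)) := by
      have habs : |ν * (h n - h m)| ≤ ν * dist n m := by
        rw [abs_mul, abs_of_nonneg hν0]
        exact mul_le_mul_of_nonneg_left (hlip n m) hν0
      have := key_bound ν β (dist n m) (ν * (h n - h m)) hν0 (by rw [hβdef]; linarith) hβ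
        habs
      have hK : ν / β = K := hKβ.symm
      rw [hK] at this
      have hexp : Real.exp (β * dist n m)
          = Real.exp (α * dist n m / 2) * Real.exp (-μ * dist n m / 2) := by
        rw [← Real.exp_add]; congr 1; rw [hβdef]; ring
      rw [← hexp]
      calc ‖c n m‖ = |Real.exp (ν * (h n - h m)) - 1| := by
            rw [hcdef]; rw [Complex.norm_real]; exact Real.norm_eq_abs _
        _ ≤ K * Real.exp (β * dist n m) := this
    calc ‖(starRingEnd ℂ) (φ n) * (χ m * (c n m * Hmat H n m))‖
        = ‖φ n‖ * (‖χ m‖ * (‖c n m‖ * ‖Hmat H n m‖)) := by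
          simp [norm_mul]
      _ ≤ ‖φ n‖ * (‖χ m‖ * ((K * (Real.exp (α * dist n m / 2) * Real.exp (-μ * dist n m / 2)))
            * ‖Hmat H n m‖)) := by gcongr <;> positivity
      _ = f (n, m) * g (n, m) := by rw [hfdef, hgdef]; ring
  have hf2 : ∑ p ∈ P, f p ^ 2 ≤ Mα ^ 2 * ‖φ‖ ^ 2 := by
    have hsub : ∑ p ∈ P, f p ^ 2
        ≤ ∑ p ∈ (sφ ×ˢ sχ).filter (fun p => p.2 ≠ p.1), f p ^ 2 := by
      apply Finset.sum_le_sum_of_subset_of_nonneg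
      · intro p hp
        rw [Finset.mem_filter] at hp
        rw [Finset.mem_filter]
        exact ⟨hp.1, hp.2.2⟩
      · intro p _ _; positivity
    refine hsub.trans ?_
    rw [Finset.sum_filter, Finset.sum_product]
    have hrow : ∀ n ∈ sφ, (∑ m ∈ sχ, if (n, m).2 ≠ (n, m).1 then f (n, m) ^ 2 else 0)
        ≤ ‖φ n‖ ^ 2 * Mα ^ 2 := by
      intro n _
      have hrewrite : ∀ m : G, (if (n, m).2 ≠ (n, m).1 then f (n, m) ^ 2 else 0)
          = ‖φ n‖ ^ 2 * Set.indicator {m' : G | m' ≠ n}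
              (fun m' => ‖Hmat H n m'‖ ^ 2 * Real.exp (α * dist n m')) m := by
        intro m
        show (if m ≠ n then f (n, m) ^ 2 else 0) = _
        by_cases hmn : m ≠ n
        · rw [if_pos hmn, Set.indicator_of_mem (show m ∈ {m' : G | m' ≠ n} from hmn)
            (fun m' => ‖Hmat H n m'‖ ^ 2 * Real.exp (α * dist n m'))]
          simp only [hfdef]
          have e2 : Real.exp (α * dist n m / 2) * Real.exp (α * dist n m / 2)
              = Real.exp (α * dist n m) := by rw [← Real.exp_add]; congr 1; ring
          rw [mul_pow, mul_pow, pow_two (Real.exp (α * dist n m / 2)), e2]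
          ring
        · rw [if_neg hmn, Set.indicator_of_notMem (show m ∉ {m' : G | m' ≠ n} from hmn)
            (fun m' => ‖Hmat H n m'‖ ^ 2 * Real.exp (α * dist n m')), mul_zero]
      calc (∑ m ∈ sχ, if (n, m).2 ≠ (n, m).1 then f (n, m) ^ 2 else 0)
          = ∑ m ∈ sχ, ‖φ n‖ ^ 2 * Set.indicator {m' : G | m' ≠ n}
              (fun m' => ‖Hmat H n m'‖ ^ 2 * Real.exp (α * dist n m')) m := by
            exact Finset.sum_congr rfl (fun m _ => hrewrite m)
        _ = ‖φ n‖ ^ 2 * ∑ m ∈ sχ, Set.indicator {m' : G | m' ≠ n}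
              (fun m' => ‖Hmat H n m'‖ ^ 2 * Real.exp (α * dist n m')) m := by
            rw [Finset.mul_sum]
        _ ≤ ‖φ n‖ ^ 2 * Mα ^ 2 := by
            apply mul_le_mul_of_nonneg_left ?_ (by positivity)
            refine le_trans ((hMsummable n).sum_le_tsum sχ ?_) (hM n)
            intro m _
            apply Set.indicator_nonneg
            intro m' _; positivity
    calc (∑ n ∈ sφ, ∑ m ∈ sχ, if (n, m).2 ≠ (n, m).1 then f (n, m) ^ 2 else 0)
        ≤ ∑ n ∈ sφ, ‖φ n‖ ^ 2 * Mα ^ 2 := Finset.sum_le_sum hrow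
      _ = Mα ^ 2 * ∑ n ∈ sφ, ‖φ n‖ ^ 2 := by rw [← Finset.sum_mul]; ring
      _ ≤ Mα ^ 2 * ‖φ‖ ^ 2 := by
          apply mul_le_mul_of_nonneg_left (sum_sq_le_norm_sq φ sφ) (by positivity)
  -- second CS factor
  set Fsq : G → ℝ := fun m => ∑' n : G, Set.indicator {n' : G | Hmat H n' m ≠ 0}
      (fun n' => Real.exp (-μ * dist n' m)) n with hFsqdef
  have hFsq0 : ∀ m, 0 ≤ Fsq m := fun m =>
    tsum_nonneg (fun n => Set.indicator_nonneg (fun _ _ => (Real.exp_pos _).le) n)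
  have hg2 : ∑ p ∈ P, g p ^ 2 ≤ K ^ 2 * (a * ‖H χ‖ + b * ‖χ‖) ^ 2 := by
    have hsub : ∑ p ∈ P, g p ^ 2
        ≤ ∑ p ∈ (sφ ×ˢ sχ).filter (fun p => Hmat H p.1 p.2 ≠ 0), g p ^ 2 := by
      apply Finset.sum_le_sum_of_subset_of_nonneg
      · intro p hp
        rw [Finset.mem_filter] at hp ⊢
        exact ⟨hp.1, hp.2.1⟩
      · intro p _ _; positivity
    refine hsub.trans ?_
    rw [Finset.sum_filter, Finset.sum_product_right]
    have hcol : ∀ m ∈ sχ, (∑ n ∈ sφ, if Hmat H (n, m).1 (n, m).2 ≠ 0 then g (n, m) ^ 2 else 0)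
        ≤ K ^ 2 * ‖χ m‖ ^ 2 * Fsq m := by
      intro m _
      have hrewrite : ∀ n : G, (if Hmat H (n, m).1 (n, m).2 ≠ 0 then g (n, m) ^ 2 else 0)
          = K ^ 2 * ‖χ m‖ ^ 2 * Set.indicator {n' : G | Hmat H n' m ≠ 0}
              (fun n' => Real.exp (-μ * dist n' m)) n := by
        intro n
        show (if Hmat H n m ≠ 0 then g (n, m) ^ 2 else 0) = _
        by_cases hnm : Hmat H n m ≠ 0
        · rw [if_pos hnm, Set.indicator_of_mem (show n ∈ {n' : G | Hmat H n' m ≠ 0} from hnm)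
            (fun n' => Real.exp (-μ * dist n' m))]
          simp only [hgdef]
          have e2 : Real.exp (-μ * dist n m / 2) * Real.exp (-μ * dist n m / 2)
              = Real.exp (-μ * dist n m) := by rw [← Real.exp_add]; congr 1; ring
          rw [mul_pow, mul_pow, pow_two (Real.exp (-μ * dist n m / 2)), e2]
          ring
        · rw [if_neg hnm, Set.indicator_of_notMem (show n ∉ {n' : G | Hmat H n' m ≠ 0} from hnm)
            (fun n' => Real.exp (-μ * dist n' m)), mul_zero]
      calc (∑ n ∈ sφ, if Hmat H (n, m).1 (n, m).2 ≠ 0 then g (n, m) ^ 2 else 0)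
          = ∑ n ∈ sφ, K ^ 2 * ‖χ m‖ ^ 2 * Set.indicator {n' : G | Hmat H n' m ≠ 0}
              (fun n' => Real.exp (-μ * dist n' m)) n :=
            Finset.sum_congr rfl (fun n _ => hrewrite n)
        _ = K ^ 2 * ‖χ m‖ ^ 2 * ∑ n ∈ sφ, Set.indicator {n' : G | Hmat H n' m ≠ 0}
              (fun n' => Real.exp (-μ * dist n' m)) n := by rw [Finset.mul_sum]
        _ ≤ K ^ 2 * ‖χ m‖ ^ 2 * Fsq m := by
            apply mul_le_mul_of_nonneg_left ?_ (by positivity)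
            exact (hFsummable m).sum_le_tsum sφ (fun n _ => Set.indicator_nonneg
              (fun _ _ => (Real.exp_pos _).le) n)
    have hchain : ∑ m ∈ sχ, Fsq m * ‖χ m‖ ^ 2 ≤ (a * ‖H χ‖ + b * ‖χ‖) ^ 2 := by
      have hsupp : (Function.support fun n : G => χ n).Finite := by
        apply Set.Finite.subset sχ.finite_toSet
        intro n hn
        by_contra hns
        exact hn (hsχ n hns)
      have hEN := hF χ hsupp
      have h1 : ENNReal.ofReal (∑ m ∈ sχ, Fsq m * ‖χ m‖ ^ 2)
          ≤ ENNReal.ofReal ((a * ‖H χ‖ + b * ‖χ‖) ^ 2) := by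
        rw [ENNReal.ofReal_sum_of_nonneg (fun m _ => mul_nonneg (hFsq0 m) (by positivity))]
        exact le_trans (ENNReal.sum_le_tsum sχ) hEN
      rwa [ENNReal.ofReal_le_ofReal_iff (by positivity)] at h1
    calc (∑ m ∈ sχ, ∑ n ∈ sφ, if Hmat H (n, m).1 (n, m).2 ≠ 0 then g (n, m) ^ 2 else 0)
        ≤ ∑ m ∈ sχ, K ^ 2 * ‖χ m‖ ^ 2 * Fsq m := Finset.sum_le_sum hcol
      _ = K ^ 2 * ∑ m ∈ sχ, Fsq m * ‖χ m‖ ^ 2 := by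
          rw [Finset.mul_sum]; congr 1; funext m; ring
      _ ≤ K ^ 2 * (a * ‖H χ‖ + b * ‖χ‖) ^ 2 := by
          exact mul_le_mul_of_nonneg_left hchain (by positivity)
  have hsum0 : 0 ≤ ∑ p ∈ P, f p * g p :=
    Finset.sum_nonneg (fun p _ => mul_nonneg (hf0 p) (hg0 p))
  have hrhs0 : 0 ≤ Mα * K * ‖φ‖ * (a * ‖H χ‖ + b * ‖χ‖) := by positivity
  have hsumfg : ∑ p ∈ P, f p * g p ≤ Mα * K * ‖φ‖ * (a * ‖H χ‖ + b * ‖χ‖) := by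
    have hcs := Finset.sum_mul_sq_le_sq_mul_sq P f g
    have hsq : (∑ p ∈ P, f p * g p) ^ 2 ≤ (Mα * K * ‖φ‖ * (a * ‖H χ‖ + b * ‖χ‖)) ^ 2 := by
      calc (∑ p ∈ P, f p * g p) ^ 2 ≤ (∑ p ∈ P, f p ^ 2) * ∑ p ∈ P, g p ^ 2 := hcs
        _ ≤ (Mα ^ 2 * ‖φ‖ ^ 2) * (K ^ 2 * (a * ‖H χ‖ + b * ‖χ‖) ^ 2) := by
            apply mul_le_mul hf2 hg2 (Finset.sum_nonneg (fun p _ => sq_nonneg _)) (by positivity)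
        _ = (Mα * K * ‖φ‖ * (a * ‖H χ‖ + b * ‖χ‖)) ^ 2 := by ring
    exact (pow_le_pow_iff_left₀ hsum0 hrhs0 two_ne_zero).mp hsq
  calc ‖⟪φ, B χ⟫_ℂ‖
      = ‖∑ p ∈ P, (starRingEnd ℂ) (φ p.1) * (χ p.2 * (c p.1 p.2 * Hmat H p.1 p.2))‖ := by
        rw [hrestrict]
    _ ≤ ∑ p ∈ P, ‖(starRingEnd ℂ) (φ p.1) * (χ p.2 * (c p.1 p.2 * Hmat H p.1 p.2))‖ :=
        norm_sum_le _ _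
    _ ≤ ∑ p ∈ P, f p * g p := Finset.sum_le_sum hpoint
    _ ≤ Mα * K * ‖φ‖ * (a * ‖H χ‖ + b * ‖χ‖) := hsumfg
    _ = Mα * (2 * ν / (α - μ)) * ‖φ‖ * (a * ‖H χ‖ + b * ‖χ‖) := by rw [hKdef]

end core

section extension

variable [DecidableEq G]

lemma norm_le_of_finsupp_inner (ξ : lp (fun _ : G => ℂ) 2) (C : ℝ) (hC : 0 ≤ C)
    (hineq : ∀ φ : lp (fun _ : G => ℂ) 2, ∀ sφ : Finset G, (∀ n ∉ sφ, φ n = 0) →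
      ‖⟪φ, ξ⟫_ℂ‖ ≤ C * ‖φ‖) : ‖ξ‖ ≤ C := by
  have h2 : (0:ℝ) < ((2 : ℝ≥0∞)).toReal := by norm_num
  refine lp.norm_le_of_forall_sum_le h2 hC (fun s => ?_)
  set φs : lp (fun _ : G => ℂ) 2 := ∑ n ∈ s, lp.single 2 n (ξ n) with hφsdef
  have hφscoe : ∀ k : G, φs k = if k ∈ s then ξ k else 0 := fun k => partial_coe ξ s k
  have hφssupp : ∀ k ∉ s, φs k = 0 := fun k hk => by rw [hφscoe k, if_neg hk]
  set X : ℝ := ∑ n ∈ s, ‖ξ n‖ ^ 2 with hXdef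
  have hX0 : 0 ≤ X := Finset.sum_nonneg (fun n _ => sq_nonneg _)
  have hnormφs : ‖φs‖ ^ 2 = X := by
    have := lp.norm_sum_single h2 (fun n => (ξ n : ℂ)) s
    simp only [rpow_two_eq] at this
    rw [hφsdef, hXdef]
    exact this
  have hinnerφs : ⟪φs, ξ⟫_ℂ = (X : ℂ) := by
    rw [inner_finsupp s φs ξ hφssupp, hXdef]
    push_cast
    refine Finset.sum_congr rfl (fun n hn => ?_)
    rw [hφscoe n, if_pos hn]
    exact RCLike.conj_mul (ξ n)
  have hXle : X ≤ C * ‖φs‖ := by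
    have := hineq φs s hφssupp
    rw [hinnerφs] at this
    rwa [Complex.norm_real, Real.norm_eq_abs, abs_of_nonneg hX0] at this
  have hφsle : ‖φs‖ ≤ C := by
    rcases eq_or_lt_of_le (norm_nonneg φs) with h0 | h0
    · rw [← h0]; exact hC
    · have : ‖φs‖ * ‖φs‖ ≤ C * ‖φs‖ := by rw [← pow_two]; rw [hnormφs]; exact hXle
      exact le_of_mul_le_mul_right this h0
  calc ∑ n ∈ s, ‖ξ n‖ ^ ((2 : ℝ≥0∞)).toReal = X := by
        rw [hXdef]; exact Finset.sum_congr rfl (fun n _ => rpow_two_eq _)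
    _ = ‖φs‖ ^ 2 := hnormφs.symm
    _ ≤ C ^ 2 := by apply pow_le_pow_left₀ (norm_nonneg _) hφsle
    _ = C ^ ((2 : ℝ≥0∞)).toReal := (rpow_two_eq C).symm

lemma extend_bound (A H : lp (fun _ : G => ℂ) 2 →L[ℂ] lp (fun _ : G => ℂ) 2) (c1 c2 : ℝ)
    (hfin : ∀ χ : lp (fun _ : G => ℂ) 2, ∀ sχ : Finset G, (∀ m ∉ sχ, χ m = 0) →
      ‖A χ‖ ≤ c1 * ‖H χ‖ + c2 * ‖χ‖) (χ : lp (fun _ : G => ℂ) 2) :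
    ‖A χ‖ ≤ c1 * ‖H χ‖ + c2 * ‖χ‖ := by
  have hsum : HasSum (fun n => lp.single 2 n (χ n)) χ :=
    lp.hasSum_single (by norm_num) χ
  have htend : Filter.Tendsto (fun s : Finset G => ∑ n ∈ s, lp.single 2 n (χ n))
      Filter.atTop (nhds χ) := hsum
  have h1 : Filter.Tendsto (fun s : Finset G => ‖A (∑ n ∈ s, lp.single 2 n (χ n))‖)
      Filter.atTop (nhds ‖A χ‖) :=
    ((A.continuous.tendsto χ).comp htend).norm
  have h2 : Filter.Tendsto (fun s : Finset G =>
        c1 * ‖H (∑ n ∈ s, lp.single 2 n (χ n))‖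
          + c2 * ‖(∑ n ∈ s, lp.single 2 n (χ n) : lp (fun _ : G => ℂ) 2)‖)
      Filter.atTop (nhds (c1 * ‖H χ‖ + c2 * ‖χ‖)) := by
    apply Filter.Tendsto.add
    · exact (((H.continuous.tendsto χ).comp htend).norm).const_mul c1
    · exact (htend.norm).const_mul c2
  refine le_of_tendsto_of_tendsto' h1 h2 (fun s => ?_)
  exact hfin _ s (fun m hm => by rw [partial_coe, if_neg hm])

end extension

end CT

set_option maxHeartbeats 2000000 in
/-- Abstract Combes–Thomas bound.  H is a self-adjoint operator on ℓ²(G) whose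
kernel satisfies  ∑_{m≠n}|⟨n|H|m⟩|² e^{α d(n,m)} ≤ M_α² uniformly in n, and the
multiplication operator F_μ(m)² = ∑_{n : ⟨n|H|m⟩≠0} e^{−μ d(n,m)} (μ < α) is
relatively H-bounded with constants a, b.  Then for z ∉ σ(H), 0 ≤ ν obeying
ν < ((α−μ)/(2M_α))·min{M_α, 1/a, 1/(a‖H(H−z)⁻¹‖+b‖(H−z)⁻¹‖)} (stated in
product form to handle a = 0), and any S, T ⊆ G:
‖P_S (H−z)⁻¹ P_T‖ ≤ A_{z;ν} e^{−ν d(S,T)}, expressed via vectors supported in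
S and T respectively. -/
theorem stmt15 {G : Type*} [Countable G] [MetricSpace G] [DecidableEq G]
    (H : lp (fun _ : G => ℂ) 2 →L[ℂ] lp (fun _ : G => ℂ) 2)
    (hH : IsSelfAdjoint H)
    (α μ : ℝ) (hα : 0 < α) (hμα : μ < α)
    (Mα a b : ℝ) (hMα : 0 < Mα) (ha : 0 ≤ a) (hb : 0 ≤ b)
    (hMsummable : ∀ n : G, Summable fun m : G =>
      Set.indicator {m' : G | m' ≠ n}
        (fun m' => ‖Hmat H n m'‖ ^ 2 * Real.exp (α * dist n m')) m)
    (hM : ∀ n : G,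
      (∑' m : G, Set.indicator {m' : G | m' ≠ n}
          (fun m' => ‖Hmat H n m'‖ ^ 2 * Real.exp (α * dist n m')) m) ≤ Mα ^ 2)
    (hFsummable : ∀ m : G, Summable fun n : G =>
      Set.indicator {n' : G | Hmat H n' m ≠ 0} (fun n' => Real.exp (-μ * dist n' m)) n)
    (hF : ∀ ψ : lp (fun _ : G => ℂ) 2, (Function.support fun n : G => ψ n).Finite →
      (∑' m : G, ENNReal.ofReal
          ((∑' n : G, Set.indicator {n' : G | Hmat H n' m ≠ 0}
              (fun n' => Real.exp (-μ * dist n' m)) n) * ‖ψ m‖ ^ 2))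
        ≤ ENNReal.ofReal ((a * ‖H ψ‖ + b * ‖ψ‖) ^ 2))
    (z : ℂ) (hz : z ∉ spectrum ℂ H)
    (ν : ℝ) (hν0 : 0 ≤ ν)
    (hν1 : ν < (α - μ) / 2)
    (hν2 : 2 * Mα * a * ν < α - μ)
    (hν3 : 2 * Mα * ν *
        (a * ‖H ∘L Ring.inverse (H - algebraMap ℂ (lp (fun _ : G => ℂ) 2 →L[ℂ] lp (fun _ : G => ℂ) 2) z)‖
          + b * ‖Ring.inverse (H - algebraMap ℂ (lp (fun _ : G => ℂ) 2 →L[ℂ] lp (fun _ : G => ℂ) 2) z)‖)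
      < α - μ)
    (S T : Set G) (φ ψ : lp (fun _ : G => ℂ) 2)
    (hφ : ∀ n ∉ S, φ n = 0) (hψ : ∀ n ∉ T, ψ n = 0) :
    ‖⟪φ, (Ring.inverse (H - algebraMap ℂ (lp (fun _ : G => ℂ) 2 →L[ℂ] lp (fun _ : G => ℂ) 2) z)) ψ⟫_ℂ‖
      ≤ (‖Ring.inverse (H - algebraMap ℂ (lp (fun _ : G => ℂ) 2 →L[ℂ] lp (fun _ : G => ℂ) 2) z)‖ /
            (1 - (2 * Mα * ν / (α - μ)) *
              (a * ‖H ∘L Ring.inverse (H - algebraMap ℂ (lp (fun _ : G => ℂ) 2 →L[ℂ] lp (fun _ : G => ℂ) 2) z)‖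
                + b * ‖Ring.inverse (H - algebraMap ℂ (lp (fun _ : G => ℂ) 2 →L[ℂ] lp (fun _ : G => ℂ) 2) z)‖))) *
          Real.exp (-ν * sInf ((fun p : G × G => dist p.1 p.2) '' S ×ˢ T)) * ‖φ‖ * ‖ψ‖ := by
  classical
  have hαμ : 0 < α - μ := by linarith
  set z' : lp (fun _ : G => ℂ) 2 →L[ℂ] lp (fun _ : G => ℂ) 2 :=
    algebraMap ℂ (lp (fun _ : G => ℂ) 2 →L[ℂ] lp (fun _ : G => ℂ) 2) z with hz'def
  set R := Ring.inverse (H - z') with hRdef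
  set X : ℝ := a * ‖H ∘L R‖ + b * ‖R‖ with hXdef
  have hX0 : 0 ≤ X := by
    rw [hXdef]; positivity
  set ccon : ℝ := 2 * Mα * ν / (α - μ) * X with hccondef
  have hc0 : 0 ≤ ccon := by positivity
  have hc1 : ccon < 1 := by
    rw [hccondef, div_mul_eq_mul_div, div_lt_one hαμ]
    calc 2 * Mα * ν * X = 2 * Mα * ν * (a * ‖H ∘L R‖ + b * ‖R‖) := by rw [hXdef]
      _ < α - μ := hν3
  have h1c : 0 < 1 - ccon := by linarith
  set D := sInf ((fun p : G × G => dist p.1 p.2) '' S ×ˢ T) with hDdef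
  have hD0 : 0 ≤ D := Real.sInf_nonneg (by rintro x ⟨p, _, rfl⟩; exact dist_nonneg)
  rcases Set.eq_empty_or_nonempty T with rfl | hTne
  · have hψ0 : ψ = 0 := by
      apply lp.ext; funext n
      have := hψ n (Set.notMem_empty n)
      simpa using this
    rw [hψ0, map_zero, inner_zero_right, norm_zero, norm_zero, mul_zero]
  rcases Set.eq_empty_or_nonempty S with rfl | hSne
  · have hφ0 : φ = 0 := by
      apply lp.ext; funext n
      have := hφ n (Set.notMem_empty n)
      simpa using this
    rw [hφ0, inner_zero_left, norm_zero, norm_zero, mul_zero, zero_mul]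
  -- resolvent identities
  have hunit : IsUnit (H - z') := by
    have h0 := spectrum.notMem_iff.mp hz
    have h' := h0.neg
    rwa [neg_sub] at h'
  have hRmul : (H - z') * R = 1 := Ring.mul_inverse_cancel _ hunit
  have hmulR : R * (H - z') = 1 := Ring.inverse_mul_cancel _ hunit
  -- weight function
  set h : G → ℝ := CT.hfun T D with hhdef
  have hh0 : ∀ n, 0 ≤ h n := CT.hfun_nonneg T D hD0
  have hhD : ∀ n, h n ≤ D := CT.hfun_le T D
  have hhT : ∀ n ∈ T, h n = 0 := fun n hn => CT.hfun_eq_zero T D hD0 hn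
  have hhS : ∀ n ∈ S, h n = D := by
    intro n hn
    apply CT.hfun_eq_of_le
    apply le_csInf (hTne.image _)
    rintro x ⟨k, hk, rfl⟩
    exact csInf_le ⟨0, by rintro y ⟨p, _, rfl⟩; exact dist_nonneg⟩
      ⟨(n, k), Set.mk_mem_prod hn hk, rfl⟩
  have hlip : ∀ n m, |h n - h m| ≤ dist n m := fun n m => CT.hfun_lip T D n m
  -- multiplication operators
  set wp : G → ℂ := fun n => ((Real.exp (ν * h n) : ℝ) : ℂ) with hwpdef
  set wm : G → ℂ := fun n => ((Real.exp (-(ν * h n)) : ℝ) : ℂ) with hwmdef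
  have hwpb : ∀ n, ‖wp n‖ ≤ Real.exp (ν * D) := by
    intro n
    rw [hwpdef]
    simp only [Complex.norm_real, Real.norm_eq_abs, Real.abs_exp]
    exact Real.exp_le_exp.mpr (mul_le_mul_of_nonneg_left (hhD n) hν0)
  have hwmb : ∀ n, ‖wm n‖ ≤ 1 := by
    intro n
    rw [hwmdef]
    simp only [Complex.norm_real, Real.norm_eq_abs, Real.abs_exp]
    rw [show (1:ℝ) = Real.exp 0 by simp]
    apply Real.exp_le_exp.mpr
    simp only [neg_nonpos, Real.exp_zero]
    nlinarith [hh0 n, mul_nonneg hν0 (hh0 n)]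
  set Wp := CT.mulOp wp (Real.exp (ν * D)) (Real.exp_pos _).le hwpb with hWpdef
  set Wm := CT.mulOp wm 1 zero_le_one hwmb with hWmdef
  have hWpWm : Wp * Wm = 1 := by
    ext ξ n
    show (Wp (Wm ξ)) n = ((1 : lp (fun _ : G => ℂ) 2 →L[ℂ] lp (fun _ : G => ℂ) 2) ξ) n
    rw [ContinuousLinearMap.one_apply, hWpdef, hWmdef, CT.mulOp_apply, CT.mulOp_apply]
    rw [hwpdef, hwmdef, ← mul_assoc, ← Complex.ofReal_mul, ← Real.exp_add]
    simp
  have hWmWp : Wm * Wp = 1 := by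
    ext ξ n
    show (Wm (Wp ξ)) n = ((1 : lp (fun _ : G => ℂ) 2 →L[ℂ] lp (fun _ : G => ℂ) 2) ξ) n
    rw [ContinuousLinearMap.one_apply, hWpdef, hWmdef, CT.mulOp_apply, CT.mulOp_apply]
    rw [hwpdef, hwmdef, ← mul_assoc, ← Complex.ofReal_mul, ← Real.exp_add]
    simp
  set B := Wp * H * Wm - H with hBdef
  -- matrix elements of B
  have hBmat : ∀ m n : G, (B (lp.single 2 m 1)) n
      = ((Real.exp (ν * (h n - h m)) - 1 : ℝ) : ℂ) * Hmat H n m := by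
    intro m n
    have hWmsingle : Wm (lp.single 2 m 1)
        = (wm m) • (lp.single 2 m (1:ℂ) : lp (fun _ : G => ℂ) 2) := by
      apply lp.ext; funext k
      rw [hWmdef, CT.mulOp_apply, lp.coeFn_smul, Pi.smul_apply, smul_eq_mul]
      by_cases hkm : k = m
      · subst hkm; rw [lp.single_apply_self]
      · rw [lp.single_apply_ne 2 m 1 hkm, mul_zero, mul_zero]
    have happ : (B (lp.single 2 m 1)) = Wp (H (Wm (lp.single 2 m 1))) - H (lp.single 2 m 1) := by
      rw [hBdef]; rfl
    rw [happ, lp.coeFn_sub, Pi.sub_apply, hWmsingle, map_smul, hWpdef, CT.mulOp_apply,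
      lp.coeFn_smul, Pi.smul_apply, smul_eq_mul]
    rw [← CT.Hmat_eq H n m, hwpdef, hwmdef]
    have hprod : Real.exp (ν * h n) * Real.exp (-(ν * h m)) = Real.exp (ν * (h n - h m)) := by
      rw [← Real.exp_add]; ring_nf
    rw [show ((Real.exp (ν * (h n - h m)) - 1 : ℝ) : ℂ)
        = ((Real.exp (ν * h n) : ℝ) : ℂ) * ((Real.exp (-(ν * h m)) : ℝ) : ℂ) - 1 by
      rw [← Complex.ofReal_mul, hprod]; push_cast; ring]
    ring
  -- norm bound on B
  have hBnorm : ∀ χ : lp (fun _ : G => ℂ) 2,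
      ‖B χ‖ ≤ (Mα * (2 * ν / (α - μ)) * a) * ‖H χ‖ + (Mα * (2 * ν / (α - μ)) * b) * ‖χ‖ := by
    apply CT.extend_bound
    intro χ sχ hsχ
    have hfin : ‖B χ‖ ≤ Mα * (2 * ν / (α - μ)) * (a * ‖H χ‖ + b * ‖χ‖) := by
      apply CT.norm_le_of_finsupp_inner _ _ (by positivity)
      intro φ' sφ' hsφ'
      calc ‖⟪φ', B χ⟫_ℂ‖ ≤ Mα * (2 * ν / (α - μ)) * ‖φ'‖ * (a * ‖H χ‖ + b * ‖χ‖) :=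
            CT.core_estimate H B α μ Mα a b hMα ha hb hαμ hMsummable hM hFsummable hF
              ν hν0 hν1.le h hlip hBmat φ' χ sφ' sχ hsφ' hsχ
        _ = (Mα * (2 * ν / (α - μ)) * (a * ‖H χ‖ + b * ‖χ‖)) * ‖φ'‖ := by ring
    calc ‖B χ‖ ≤ Mα * (2 * ν / (α - μ)) * (a * ‖H χ‖ + b * ‖χ‖) := hfin
      _ = (Mα * (2 * ν / (α - μ)) * a) * ‖H χ‖ + (Mα * (2 * ν / (α - μ)) * b) * ‖χ‖ := by ring
  have hBR : ‖B * R‖ ≤ ccon := by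
    apply ContinuousLinearMap.opNorm_le_bound _ hc0
    intro ξ
    have h1 : (B * R) ξ = B (R ξ) := rfl
    rw [h1]
    have hHR : ‖H (R ξ)‖ ≤ ‖H ∘L R‖ * ‖ξ‖ := (H ∘L R).le_opNorm ξ
    have hRξ : ‖R ξ‖ ≤ ‖R‖ * ‖ξ‖ := R.le_opNorm ξ
    calc ‖B (R ξ)‖
        ≤ (Mα * (2 * ν / (α - μ)) * a) * ‖H (R ξ)‖ + (Mα * (2 * ν / (α - μ)) * b) * ‖R ξ‖ :=
          hBnorm _
      _ ≤ (Mα * (2 * ν / (α - μ)) * a) * (‖H ∘L R‖ * ‖ξ‖)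
            + (Mα * (2 * ν / (α - μ)) * b) * (‖R‖ * ‖ξ‖) := by
          apply add_le_add
          · exact mul_le_mul_of_nonneg_left hHR (by positivity)
          · exact mul_le_mul_of_nonneg_left hRξ (by positivity)
      _ = ccon * ‖ξ‖ := by rw [hccondef, hXdef]; ring
  -- Neumann series
  have hBRlt : ‖-(B * R)‖ < 1 := by rw [norm_neg]; exact lt_of_le_of_lt hBR hc1
  set u : (lp (fun _ : G => ℂ) 2 →L[ℂ] lp (fun _ : G => ℂ) 2)ˣ :=
    Units.oneSub (-(B * R)) hBRlt with hudef
  have huval : (u : lp (fun _ : G => ℂ) 2 →L[ℂ] lp (fun _ : G => ℂ) 2) = 1 + B * R := by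
    rw [hudef]
    show 1 - (-(B * R)) = 1 + B * R
    rw [sub_neg_eq_add]
  set v := ((u⁻¹ : _ˣ) : lp (fun _ : G => ℂ) 2 →L[ℂ] lp (fun _ : G => ℂ) 2) with hvdef
  have hvu : v * (1 + B * R) = 1 := by rw [← huval]; exact u.inv_mul
  have huv : (1 + B * R) * v = 1 := by rw [← huval]; exact u.mul_inv
  have hvnorm : ‖v‖ ≤ (1 - ccon)⁻¹ := by
    have h2 : v * 1 + v * (B * R) = 1 := by rw [← mul_add]; exact hvu
    rw [mul_one] at h2
    have hv_eq : v = 1 - v * (B * R) := eq_sub_of_add_eq h2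
    have hb1 : ‖v‖ ≤ 1 + ‖v‖ * ccon := by
      calc ‖v‖ = ‖1 - v * (B * R)‖ := by rw [← hv_eq]
        _ ≤ ‖(1 : lp (fun _ : G => ℂ) 2 →L[ℂ] lp (fun _ : G => ℂ) 2)‖ + ‖v * (B * R)‖ :=
            norm_sub_le _ _
        _ ≤ 1 + ‖v‖ * ‖B * R‖ := by
            apply add_le_add ContinuousLinearMap.norm_id_le (norm_mul_le _ _)
        _ ≤ 1 + ‖v‖ * ccon := by
            apply add_le_add le_rfl
            exact mul_le_mul_of_nonneg_left hBR (norm_nonneg v)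
    have h3 : ‖v‖ * (1 - ccon) ≤ 1 := by nlinarith [norm_nonneg v]
    calc ‖v‖ = ‖v‖ * (1 - ccon) * (1 - ccon)⁻¹ := by
          rw [mul_assoc, mul_inv_cancel₀ (ne_of_gt h1c), mul_one]
      _ ≤ 1 * (1 - ccon)⁻¹ := mul_le_mul_of_nonneg_right h3 (inv_nonneg.mpr h1c.le)
      _ = (1 - ccon)⁻¹ := one_mul _
  -- operator identities
  have hcancWmWp : ∀ Y : lp (fun _ : G => ℂ) 2 →L[ℂ] lp (fun _ : G => ℂ) 2,
      Wm * (Wp * Y) = Y := fun Y => by rw [← mul_assoc, hWmWp, one_mul]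
  have hRHz : ∀ Y : lp (fun _ : G => ℂ) 2 →L[ℂ] lp (fun _ : G => ℂ) 2,
      R * ((H - z') * Y) = Y := fun Y => by rw [← mul_assoc, hmulR, one_mul]
  have hzWpWm : Wp * z' * Wm = z' := by
    rw [hz'def, Algebra.algebraMap_eq_smul_one, mul_smul_comm, mul_one, smul_mul_assoc, hWpWm]
  set Kop := Wp * (H - z') * Wm with hKopdef
  have hKop1 : Kop = (1 + B * R) * (H - z') := by
    have hBRHz : (B * R) * (H - z') = B := by rw [mul_assoc, hmulR, mul_one]
    calc Kop = Wp * H * Wm - Wp * z' * Wm := by rw [hKopdef, mul_sub, sub_mul]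
      _ = (B + H) - z' := by rw [hzWpWm, hBdef]; abel
      _ = (1 + B * R) * (H - z') := by rw [add_mul, one_mul, hBRHz]; abel
  set Ghat := Wp * R * Wm with hGhatdef
  have hGhatK : Ghat * Kop = 1 := by
    rw [hGhatdef, hKopdef]
    simp only [mul_assoc]
    rw [hcancWmWp ((H - z') * Wm), hRHz Wm]
    exact hWpWm
  have hKopRv : Kop * (R * v) = 1 := by
    rw [hKop1]
    calc (1 + B * R) * (H - z') * (R * v) = (1 + B * R) * ((H - z') * R * v) := by
          simp only [mul_assoc]
      _ = (1 + B * R) * v := by rw [hRmul, one_mul]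
      _ = 1 := huv
  have hGhat_eq : Ghat = R * v := left_inv_eq_right_inv hGhatK hKopRv
  have hGhatnorm : ‖Ghat‖ ≤ ‖R‖ * (1 - ccon)⁻¹ := by
    rw [hGhat_eq]
    calc ‖R * v‖ ≤ ‖R‖ * ‖v‖ := norm_mul_le _ _
      _ ≤ ‖R‖ * (1 - ccon)⁻¹ := mul_le_mul_of_nonneg_left hvnorm (norm_nonneg R)
  have hR_rec : R = Wm * Ghat * Wp := by
    rw [hGhatdef]
    calc R = (Wm * Wp) * R * (Wm * Wp) := by rw [hWmWp, one_mul, mul_one]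
      _ = Wm * (Wp * R * Wm) * Wp := by simp only [mul_assoc]
  -- action on the supported vectors
  have hWpψ : Wp ψ = ψ := by
    apply lp.ext; funext k
    rw [hWpdef, CT.mulOp_apply]
    by_cases hk : k ∈ T
    · rw [hwpdef]
      simp only [hhT k hk, mul_zero, Real.exp_zero, Complex.ofReal_one, one_mul]
    · rw [hψ k hk, mul_zero]
  have hWmφ : Wm φ = ((Real.exp (-(ν * D)) : ℝ) : ℂ) • φ := by
    apply lp.ext; funext k
    rw [hWmdef, CT.mulOp_apply, lp.coeFn_smul, Pi.smul_apply, smul_eq_mul]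
    by_cases hk : k ∈ S
    · rw [hwmdef]
      simp only [hhS k hk]
    · rw [hφ k hk, mul_zero, mul_zero]
  have hre : ∀ n, (starRingEnd ℂ) (wm n) = wm n := by
    intro n
    rw [hwmdef]
    exact Complex.conj_ofReal _
  have hcentral : ⟪φ, R ψ⟫_ℂ = ((Real.exp (-(ν * D)) : ℝ) : ℂ) * ⟪φ, Ghat ψ⟫_ℂ := by
    calc ⟪φ, R ψ⟫_ℂ = ⟪φ, Wm (Ghat (Wp ψ))⟫_ℂ := by rw [hR_rec]; rfl
      _ = ⟪Wm φ, Ghat (Wp ψ)⟫_ℂ := (CT.mulOp_inner wm 1 zero_le_one hwmb hre φ _).symm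
      _ = ⟪((Real.exp (-(ν * D)) : ℝ) : ℂ) • φ, Ghat ψ⟫_ℂ := by rw [hWmφ, hWpψ]
      _ = ((Real.exp (-(ν * D)) : ℝ) : ℂ) * ⟪φ, Ghat ψ⟫_ℂ := by
          rw [inner_smul_left, Complex.conj_ofReal]
  rw [hcentral, norm_mul, Complex.norm_real, Real.norm_eq_abs, Real.abs_exp]
  have hfinal : Real.exp (-(ν * D)) * ‖⟪φ, Ghat ψ⟫_ℂ‖
      ≤ Real.exp (-(ν * D)) * (‖R‖ * (1 - ccon)⁻¹ * ‖φ‖ * ‖ψ‖) := by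
    apply mul_le_mul_of_nonneg_left ?_ (Real.exp_pos _).le
    calc ‖⟪φ, Ghat ψ⟫_ℂ‖ ≤ ‖φ‖ * ‖Ghat ψ‖ := norm_inner_le_norm _ _
      _ ≤ ‖φ‖ * (‖Ghat‖ * ‖ψ‖) :=
          mul_le_mul_of_nonneg_left (Ghat.le_opNorm ψ) (norm_nonneg φ)
      _ ≤ ‖φ‖ * (‖R‖ * (1 - ccon)⁻¹ * ‖ψ‖) := by
          apply mul_le_mul_of_nonneg_left ?_ (norm_nonneg φ)
          exact mul_le_mul_of_nonneg_right hGhatnorm (norm_nonneg ψ)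
      _ = ‖R‖ * (1 - ccon)⁻¹ * ‖φ‖ * ‖ψ‖ := by ring
  calc Real.exp (-(ν * D)) * ‖⟪φ, Ghat ψ⟫_ℂ‖
      ≤ Real.exp (-(ν * D)) * (‖R‖ * (1 - ccon)⁻¹ * ‖φ‖ * ‖ψ‖) := hfinal
    _ = ‖R‖ / (1 - ccon) * Real.exp (-ν * D) * ‖φ‖ * ‖ψ‖ := by
        rw [div_eq_mul_inv, neg_mul]
        ring
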